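/- Let m > 1 be real and j an integer such that j/m is an integer and j + j/m is odd. Then z = j/m is a simple root of p(z) = sin(mπz) - m·sin(πz), i.e., p(j/m) = 0 and p'(j/m) ≠ 0. -/
import Mathlib


open Complex Real

lemma cos_int_pi (k : ℤ) : Complex.cos ((k : ℂ) * (Real.pi : ℂ)) = (-1) ^ k := by
  have h : Real.cos ((k : ℝ) * Real.pi) = (-1) ^ k := by
    simpa using Real.cos_int_mul_pi_sub 0 k
  calc Complex.cos ((k : ℂ) * (Real.pi : ℂ))
      = ((Real.cos ((k : ℝ) * Real.pi) : ℝ) : ℂ) := by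
        rw [Complex.ofReal_cos]; push_cast; ring_nf
    _ = (-1) ^ k := by rw [h]; push_cast; ring

theorem simple_root_odd_case (m : ℝ) (hm : 1 < m) (j n : ℤ)
    (hn : (j : ℝ) = n * m) (hpar : Odd (j + n)) :
    (fun z : ℂ => Complex.sin (m * Real.pi * z) - m * Complex.sin (Real.pi * z))
        ((j : ℂ) / m) = 0 ∧
    deriv (fun z : ℂ => Complex.sin (m * Real.pi * z) - m * Complex.sin (Real.pi * z))
        ((j : ℂ) / m) ≠ 0 := by
  have hm0 : (m : ℂ) ≠ 0 := by
    exact_mod_cast ne_of_gt (lt_trans one_pos hm)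
  have hjc : (j : ℂ) = (n : ℂ) * (m : ℂ) := by exact_mod_cast congrArg Complex.ofReal hn
  have hz : (j : ℂ) / m = (n : ℂ) := by
    rw [hjc]; field_simp
  constructor
  · simp only
    rw [hz]
    have h1 : (m : ℂ) * (Real.pi : ℂ) * (n : ℂ) = (j : ℂ) * Real.pi := by
      rw [hjc]; ring
    have h2 : (Real.pi : ℂ) * (n : ℂ) = (n : ℂ) * Real.pi := by ring
    rw [h1, h2, Complex.sin_int_mul_pi, Complex.sin_int_mul_pi]
    ring
  · have hd : ∀ z : ℂ, HasDerivAt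
        (fun z : ℂ => Complex.sin (m * Real.pi * z) - m * Complex.sin (Real.pi * z))
        ((m : ℂ) * Real.pi * Complex.cos (m * Real.pi * z)
          - m * (Real.pi * Complex.cos (Real.pi * z))) z := by
      intro z
      have h1 : HasDerivAt (fun z : ℂ => Complex.sin (m * Real.pi * z))
          ((m : ℂ) * Real.pi * Complex.cos (m * Real.pi * z)) z := by
        have := (Complex.hasDerivAt_sin ((m : ℂ) * Real.pi * z)).comp z
          (((hasDerivAt_id z).const_mul ((m : ℂ) * Real.pi)))
        simpa [Function.comp_def, mul_comm] using this
      have h2 : HasDerivAt (fun z : ℂ => Complex.sin (Real.pi * z))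
          ((Real.pi : ℂ) * Complex.cos (Real.pi * z)) z := by
        have := (Complex.hasDerivAt_sin ((Real.pi : ℂ) * z)).comp z
          (((hasDerivAt_id z).const_mul ((Real.pi : ℂ))))
        simpa [Function.comp_def, mul_comm] using this
      exact h1.sub (h2.const_mul _)
    rw [(hd _).deriv, hz]
    have h1 : (m : ℂ) * (Real.pi : ℂ) * (n : ℂ) = (j : ℂ) * Real.pi := by
      rw [hjc]; ring
    have h2 : (Real.pi : ℂ) * (n : ℂ) = (n : ℂ) * Real.pi := by ring
    rw [h1, h2, cos_int_pi, cos_int_pi]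
    have hpi : (Real.pi : ℂ) ≠ 0 := by
      exact_mod_cast Real.pi_ne_zero
    have hiff := Int.odd_add.mp hpar
    have hkey : ((-1 : ℂ)) ^ j - (-1 : ℂ) ^ n ≠ 0 := by
      rcases Int.even_or_odd j with hj | hj
      · have hnodd : Odd n := by
          rcases Int.even_or_odd n with hn' | hn'
          · exact absurd (hiff.mpr hn') (Int.not_odd_iff_even.mpr hj)
          · exact hn'
        rw [hj.neg_one_zpow, hnodd.neg_one_zpow]
        norm_num
      · have hne : Even n := hiff.mp hj
        rw [hj.neg_one_zpow, hne.neg_one_zpow]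
        norm_num
    have : (m : ℂ) * Real.pi * (-1 : ℂ) ^ j - m * (Real.pi * (-1 : ℂ) ^ n)
        = (m : ℂ) * Real.pi * ((-1 : ℂ) ^ j - (-1 : ℂ) ^ n) := by ring
    rw [this]
    exact mul_ne_zero (mul_ne_zero hm0 hpi) hkey
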